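/- Let n ≥ 1 and let D : [0,1] → M_n(ℂ) be a continuously differentiable path of Hermitian matrices such that D(0) and D(1) are invertible. Let h : ℝ → ℝ be continuous and let H : ℝ → ℝ be an antiderivative of h (i.e. H′(x) = h(x) for every x ∈ ℝ). Let sgn : ℝ → ℝ denote the sign function. Then n₋(D(0)) − n₋(D(1)) = ∫₀¹ tr(D′(t)·h(D(t))) dt + tr(H(D(0))) − tr(H(D(1))) + ½·(tr(sgn(D(1))) − tr(sgn(D(0)))), where all the traces appearing are real numbers. (This is the finite-dimensional instance of the paper's main analytic spectral flow formula, where the spectral flow of a path of Hermitian matrices with invertible endpoints equals n₋(D(0)) − n₋(D(1)).) -/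

import Mathlib

attribute [local instance] Matrix.normedAddCommGroup Matrix.normedSpace

/-- The number of negative eigenvalues (with multiplicity) of a Hermitian matrix. -/
noncomputable def negEigCount {n : ℕ} {M : Matrix (Fin n) (Fin n) ℂ}
    (hM : M.IsHermitian) : ℕ :=
  Nat.card {i : Fin n // hM.eigenvalues i < 0}

open Matrix Polynomial

namespace SpectralFlowAux

variable {n : ℕ} {M : Matrix (Fin n) (Fin n) ℂ}

/-! ### Basic derivative lemmas for matrix-valued functions -/

theorem hasDerivAt_entry {D : ℝ → Matrix (Fin n) (Fin n) ℂ}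
    {D' : Matrix (Fin n) (Fin n) ℂ} {t : ℝ} (hd : HasDerivAt D D' t) (i j : Fin n) :
    HasDerivAt (fun s => D s i j) (D' i j) t :=
  hasDerivAt_pi.mp (hasDerivAt_pi.mp hd i) j

theorem hasDerivAt_matrix_mul {D E : ℝ → Matrix (Fin n) (Fin n) ℂ}
    {D' E' : Matrix (Fin n) (Fin n) ℂ} {t : ℝ}
    (hd : HasDerivAt D D' t) (he : HasDerivAt E E' t) :
    HasDerivAt (fun s => D s * E s) (D' * E t + D t * E') t := by
  refine hasDerivAt_pi.mpr ?_
  intro i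
  rw [hasDerivAt_pi]
  intro j
  simp only [Matrix.mul_apply, Matrix.add_apply]
  rw [← Finset.sum_add_distrib]
  exact HasDerivAt.fun_sum fun k _ =>
    ((hasDerivAt_entry hd i k).mul (hasDerivAt_entry he k j))

theorem hasDerivAt_matrix_pow {D : ℝ → Matrix (Fin n) (Fin n) ℂ}
    {D' : Matrix (Fin n) (Fin n) ℂ} {t : ℝ} (hd : HasDerivAt D D' t) (k : ℕ) :
    HasDerivAt (fun s => D s ^ k)
      (∑ j ∈ Finset.range k, D t ^ j * D' * D t ^ (k - 1 - j)) t := by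
  induction k with
  | zero =>
    simp only [pow_zero, Finset.range_zero, Finset.sum_empty]
    exact hasDerivAt_const t (1 : Matrix (Fin n) (Fin n) ℂ)
  | succ k ih =>
      have := hasDerivAt_matrix_mul hd ih
      have h2 : ∀ s, D s ^ (k+1) = D s * D s ^ k := fun s => pow_succ' _ _
      simp only [h2]
      convert this using 1
      rw [Finset.mul_sum, Finset.sum_range_succ']
      simp only [pow_zero, one_mul, Nat.succ_sub_one]
      rw [add_comm]
      congr 1
      · apply Finset.sum_congr rfl
        intro j hj
        rw [Finset.mem_range] at hj
        rw [← mul_assoc, ← mul_assoc, ← pow_succ']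
        congr 2
        omega

theorem hasDerivAt_trace {D : ℝ → Matrix (Fin n) (Fin n) ℂ}
    {D' : Matrix (Fin n) (Fin n) ℂ} {t : ℝ} (hd : HasDerivAt D D' t) :
    HasDerivAt (fun s => (D s).trace) D'.trace t := by
  have : ∀ s, (D s).trace = ∑ i, D s i i := fun s => rfl
  simp only [this, Matrix.trace]
  exact HasDerivAt.fun_sum fun i _ => hasDerivAt_entry hd i i

theorem hasDerivAt_trace_pow {D : ℝ → Matrix (Fin n) (Fin n) ℂ}
    {D' : Matrix (Fin n) (Fin n) ℂ} {t : ℝ} (hd : HasDerivAt D D' t) (k : ℕ) :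
    HasDerivAt (fun s => ((D s) ^ k).trace) ((k : ℂ) * (D' * (D t) ^ (k-1)).trace) t := by
  have h1 := hasDerivAt_trace ((hasDerivAt_matrix_pow hd k))
  have h2 : (∑ j ∈ Finset.range k, D t ^ j * D' * D t ^ (k - 1 - j)).trace
      = (k : ℂ) * (D' * (D t) ^ (k-1)).trace := by
    rw [Matrix.trace_sum]
    have h3 : ∀ j ∈ Finset.range k, (D t ^ j * D' * D t ^ (k - 1 - j)).trace
        = (D' * D t ^ (k-1)).trace := by
      intro j hj
      rw [Finset.mem_range] at hj
      rw [Matrix.trace_mul_cycle (D t ^ j) D' (D t ^ (k - 1 - j)), ← pow_add]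
      have he : k - 1 - j + j = k - 1 := by omega
      rw [he, Matrix.trace_mul_comm]
    rw [Finset.sum_congr rfl h3]
    simp [mul_comm]
  rw [h2] at h1
  exact h1

/-! ### Trace and cfc lemmas -/

theorem trace_cfc' (hM : M.IsHermitian) (f : ℝ → ℝ) :
    (cfc f M).trace = ((∑ i, f (hM.eigenvalues i) : ℝ) : ℂ) := by
  rw [hM.cfc_eq, Matrix.IsHermitian.cfc]
  rw [Unitary.conjStarAlgAut_apply, Matrix.trace_mul_cycle, Unitary.coe_star_mul_self, one_mul]
  simp [Matrix.trace_diagonal]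

theorem cfc_sub' (hM : M.IsHermitian) (f g : ℝ → ℝ) :
    cfc f M - cfc g M = cfc (fun x => f x - g x) M := by
  rw [hM.cfc_eq, hM.cfc_eq, hM.cfc_eq]
  unfold Matrix.IsHermitian.cfc
  simp only [Unitary.conjStarAlgAut_apply]
  rw [← sub_mul, ← mul_sub]
  congr 2
  rw [Matrix.diagonal_sub]
  ext i j
  by_cases hij : i = j <;> simp [Matrix.diagonal_apply, hij]

theorem unitary_entry_le (hM : M.IsHermitian) (i j : Fin n) :
    ‖((hM.eigenvectorUnitary : Matrix (Fin n) (Fin n) ℂ)) i j‖ ≤ 1 := by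
  set U : Matrix (Fin n) (Fin n) ℂ := (hM.eigenvectorUnitary : Matrix (Fin n) (Fin n) ℂ) with hU
  have h1 : ((star U) * U) j j = 1 := by
    rw [Unitary.coe_star_mul_self]; simp [Matrix.one_apply]
  rw [Matrix.mul_apply] at h1
  have h2 : ∀ k, (star U) j k * U k j = ((‖U k j‖ ^ 2 : ℝ) : ℂ) := by
    intro k
    rw [Matrix.star_apply, Complex.star_def, ← Complex.normSq_eq_conj_mul_self]
    norm_cast
    exact (Complex.normSq_eq_norm_sq _)
  rw [Finset.sum_congr rfl (fun k _ => h2 k)] at h1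
  rw [← Complex.ofReal_sum] at h1
  have h3 : (∑ k, ‖U k j‖ ^ 2) = 1 := by exact_mod_cast h1
  have h4 : ‖U i j‖ ^ 2 ≤ 1 := by
    rw [← h3]
    exact Finset.single_le_sum (f := fun k => ‖U k j‖ ^ 2)
      (fun k _ => sq_nonneg _) (Finset.mem_univ i)
  nlinarith [norm_nonneg (U i j)]

theorem cfc_entry_le (hM : M.IsHermitian) (f : ℝ → ℝ) {ε : ℝ}
    (hf : ∀ i, |f (hM.eigenvalues i)| ≤ ε) (i j : Fin n) :
    ‖(cfc f M) i j‖ ≤ n * ε := by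
  have hε : 0 ≤ ε := le_trans (abs_nonneg _) (hf i)
  rw [hM.cfc_eq, Matrix.IsHermitian.cfc, Unitary.conjStarAlgAut_apply]
  set U : Matrix (Fin n) (Fin n) ℂ := (hM.eigenvectorUnitary : Matrix (Fin n) (Fin n) ℂ)
  rw [Matrix.mul_apply]
  refine le_trans (norm_sum_le _ _) ?_
  have : ∀ k, ‖(U * diagonal (Complex.ofReal ∘ f ∘ hM.eigenvalues)) i k
      * (star U) k j‖ ≤ ε := by
    intro k
    rw [norm_mul]
    have h1 : (U * diagonal (Complex.ofReal ∘ f ∘ hM.eigenvalues)) i k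
        = U i k * (f (hM.eigenvalues k) : ℂ) := by
      rw [Matrix.mul_diagonal]; rfl
    rw [h1, norm_mul]
    have h2 : ‖(star U) k j‖ ≤ 1 := by
      rw [Matrix.star_apply]
      calc ‖star (U j k)‖ = ‖U j k‖ := by
            simp
        _ ≤ 1 := unitary_entry_le hM j k
    have h3 : ‖(f (hM.eigenvalues k) : ℂ)‖ ≤ ε := by
      rw [Complex.norm_real, Real.norm_eq_abs]; exact hf k
    calc ‖U i k‖ * ‖((f (hM.eigenvalues k)):ℂ)‖ * ‖(star U) k j‖
        ≤ 1 * ε * 1 := by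
          gcongr <;> first | exact unitary_entry_le hM i k | exact h3 | exact h2
      _ = ε := by ring
  refine le_trans (Finset.sum_le_sum fun k _ => this k) ?_
  simp

theorem cfc_poly (hM : M.IsHermitian) (q : ℝ[X]) {N : ℕ} (hN : q.natDegree < N) :
    cfc (fun x => q.eval x) M = ∑ k ∈ Finset.range N, q.coeff k • M ^ k := by
  have hsa : IsSelfAdjoint M := hM
  have h1 : (fun x : ℝ => q.eval x) = fun x : ℝ => ∑ k ∈ Finset.range N, q.coeff k * x ^ k := by
    funext x
    exact q.eval_eq_sum_range' hN x
  rw [h1]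
  have h2 : (fun x : ℝ => ∑ k ∈ Finset.range N, q.coeff k * x ^ k)
      = ∑ k ∈ Finset.range N, (fun x : ℝ => q.coeff k * x ^ k) := by
    funext x; simp
  rw [h2, cfc_sum (fun k => fun x : ℝ => q.coeff k * x ^ k) M]
  refine Finset.sum_congr rfl fun k _ => ?_
  rw [cfc_const_mul (q.coeff k) (fun x : ℝ => x ^ k) M]
  rw [cfc_pow_id (R := ℝ) M k]

theorem polyTraceDeriv {D : ℝ → Matrix (Fin n) (Fin n) ℂ} {D' : ℝ → Matrix (Fin n) (Fin n) ℂ}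
    (hD : ∀ t, (D t).IsHermitian) (hderiv : ∀ t, HasDerivAt D (D' t) t)
    (q : ℝ[X]) (t : ℝ) :
    HasDerivAt (fun s => (cfc (fun x => q.eval x) (D s)).trace)
      ((D' t * cfc (fun x => q.derivative.eval x) (D t)).trace) t := by
  set d := q.natDegree with hd
  have hq' : q.derivative.natDegree < d + 1 :=
    lt_of_le_of_lt (le_trans q.natDegree_derivative_le (Nat.sub_le _ _)) (Nat.lt_succ_self d)
  have h1 : (fun s => (cfc (fun x => q.eval x) (D s)).trace)
      = fun s => ∑ k ∈ Finset.range (d+1), q.coeff k • ((D s) ^ k).trace := by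
    funext s
    rw [cfc_poly (hD s) q (Nat.lt_succ_self d), Matrix.trace_sum]
    refine Finset.sum_congr rfl fun k _ => ?_
    rw [Matrix.trace_smul]
  rw [h1]
  have h2 : HasDerivAt (fun s => ∑ k ∈ Finset.range (d+1), q.coeff k • ((D s) ^ k).trace)
      (∑ k ∈ Finset.range (d+1), q.coeff k • ((k:ℂ) * (D' t * (D t) ^ (k-1)).trace)) t :=
    HasDerivAt.fun_sum fun k _ => (hasDerivAt_trace_pow (hderiv t) k).const_smul (q.coeff k)
  convert h2 using 1
  rw [cfc_poly (hD t) q.derivative hq', Finset.mul_sum]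
  have h3 : ∀ k, D' t * (q.derivative.coeff k • (D t)^k) = q.derivative.coeff k • (D' t * (D t)^k) :=
    fun k => mul_smul_comm _ _ _
  simp only [h3]
  rw [Matrix.trace_sum]
  simp only [Matrix.trace_smul]
  have hzero1 : q.coeff (d + 1) = 0 := q.coeff_natDegree_succ_eq_zero
  conv_lhs => rw [Finset.sum_range_succ]
  conv_rhs => rw [Finset.sum_range_succ']
  simp only [Polynomial.coeff_derivative, hzero1, Nat.cast_zero, zero_mul, smul_zero,
    zero_smul, zero_mul, add_zero, zero_add]
  refine Finset.sum_congr rfl fun k _ => ?_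
  simp only [Nat.add_sub_cancel]
  rw [Complex.real_smul, Complex.real_smul]
  push_cast
  ring

/-! ### Hermitian facts -/

theorem deriv_isHermitian {D : ℝ → Matrix (Fin n) (Fin n) ℂ} {D' : ℝ → Matrix (Fin n) (Fin n) ℂ}
    (hD : ∀ t, (D t).IsHermitian) (hderiv : ∀ t, HasDerivAt D (D' t) t) (t : ℝ) :
    (D' t).IsHermitian := by
  refine Matrix.ext fun i j => ?_
  rw [Matrix.conjTranspose_apply]
  have h1 : HasDerivAt (fun s => D s i j) (D' t i j) t := hasDerivAt_entry (hderiv t) i j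
  have h2 : HasDerivAt (fun s => star (D s j i)) (star (D' t j i)) t :=
    (hasDerivAt_entry (hderiv t) j i).star
  have h3 : (fun s => star (D s j i)) = fun s => D s i j := by
    funext s
    rw [← Matrix.conjTranspose_apply, (hD s).eq]
  rw [h3] at h2
  exact (h2.unique h1).symm ▸ rfl

theorem trace_mul_im_zero {A B : Matrix (Fin n) (Fin n) ℂ}
    (hA : A.IsHermitian) (hB : B.IsHermitian) : ((A * B).trace).im = 0 := by
  have h1 : star ((A * B).trace) = (A * B).trace := by
    rw [← Matrix.trace_conjTranspose, Matrix.conjTranspose_mul, hA.eq, hB.eq,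
      Matrix.trace_mul_comm]
  rw [← Complex.conj_eq_iff_im]
  exact h1

theorem cfc_isHermitian (hM : M.IsHermitian) (f : ℝ → ℝ) :
    (cfc f M).IsHermitian := by
  have : IsSelfAdjoint (cfc f M) := cfc_predicate f M
  exact this

/-! ### Sign trace -/

theorem eig_ne_zero (hM : M.IsHermitian) (hu : IsUnit M) (i : Fin n) :
    hM.eigenvalues i ≠ 0 := by
  intro h0
  have hdet : M.det ≠ 0 := by
    intro hd
    have := (Matrix.isUnit_iff_isUnit_det M).mp hu
    rw [hd] at this
    exact this.ne_zero rfl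
  apply hdet
  rw [hM.det_eq_prod_eigenvalues]
  rw [Finset.prod_eq_zero (Finset.mem_univ i)]
  rw [h0]; simp

theorem sign_sum_eq (hM : M.IsHermitian) (hu : IsUnit M) :
    (∑ i, Real.sign (hM.eigenvalues i)) = (n : ℝ) - 2 * negEigCount hM := by
  classical
  have hcard : (negEigCount hM : ℝ)
      = (Finset.univ.filter (fun i => hM.eigenvalues i < 0)).card := by
    unfold negEigCount
    rw [Nat.card_eq_fintype_card, Fintype.card_subtype]
  rw [← Finset.sum_filter_add_sum_filter_not Finset.univ (fun i => hM.eigenvalues i < 0)]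
  have h1 : ∀ i ∈ Finset.univ.filter (fun i => hM.eigenvalues i < 0),
      Real.sign (hM.eigenvalues i) = -1 := by
    intro i hi
    rw [Finset.mem_filter] at hi
    exact Real.sign_of_neg hi.2
  have h2 : ∀ i ∈ Finset.univ.filter (fun i => ¬ hM.eigenvalues i < 0),
      Real.sign (hM.eigenvalues i) = 1 := by
    intro i hi
    rw [Finset.mem_filter] at hi
    exact Real.sign_of_pos (lt_of_le_of_ne (not_lt.mp hi.2) (Ne.symm (eig_ne_zero hM hu i)))
  rw [Finset.sum_congr rfl h1, Finset.sum_congr rfl h2]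
  rw [Finset.sum_const, Finset.sum_const]
  have h3 : (Finset.univ.filter (fun i => ¬ hM.eigenvalues i < 0)).card
      = n - (Finset.univ.filter (fun i => hM.eigenvalues i < 0)).card := by
    rw [Finset.filter_not, Finset.card_sdiff_of_subset (Finset.filter_subset _ _)]
    simp
  rw [h3, hcard]
  have h4 : (Finset.univ.filter (fun i => hM.eigenvalues i < 0)).card ≤ n := by
    calc _ ≤ Finset.univ.card := Finset.card_filter_le _ _
      _ = n := by simp
  rw [nsmul_eq_mul, nsmul_eq_mul, Nat.cast_sub h4]
  ring

/-! ### Polynomial antiderivative -/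

noncomputable def antider (p : ℝ[X]) : ℝ[X] :=
  p.sum fun k c => C (c / (k + 1)) * X ^ (k + 1)

theorem antider_derivative (p : ℝ[X]) : derivative (antider p) = p := by
  unfold antider
  rw [Polynomial.sum, map_sum]
  conv_rhs => rw [← p.sum_C_mul_X_pow_eq]
  rw [Polynomial.sum]
  refine Finset.sum_congr rfl fun k _ => ?_
  rw [derivative_C_mul_X_pow, Nat.add_sub_cancel]
  congr 1
  push_cast
  field_simp

theorem antider_eval_zero (p : ℝ[X]) : (antider p).eval 0 = 0 := by
  unfold antider
  rw [Polynomial.sum, Polynomial.eval_finset_sum]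
  refine Finset.sum_eq_zero fun k _ => ?_
  simp

end SpectralFlowAux


open SpectralFlowAux in
theorem spectral_flow_formula_finite_dim
    (n : ℕ) (hn : 1 ≤ n)
    (D : ℝ → Matrix (Fin n) (Fin n) ℂ)
    (hD : ∀ t, (D t).IsHermitian)
    (D' : ℝ → Matrix (Fin n) (Fin n) ℂ)
    (hderiv : ∀ t, HasDerivAt D (D' t) t)
    (hD'cont : Continuous D')
    (hD0 : IsUnit (D 0)) (hD1 : IsUnit (D 1))
    (h : ℝ → ℝ) (hh : Continuous h)
    (H : ℝ → ℝ) (hH : ∀ x, HasDerivAt H (h x) x) :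
    -- all the traces appearing are real numbers
    (∀ t : ℝ, ((D' t * cfc h (D t)).trace).im = 0) ∧
    ((cfc H (D 0)).trace).im = 0 ∧ ((cfc H (D 1)).trace).im = 0 ∧
    ((cfc Real.sign (D 0)).trace).im = 0 ∧ ((cfc Real.sign (D 1)).trace).im = 0 ∧
    -- the spectral flow formula
    ((negEigCount (hD 0) : ℝ) - negEigCount (hD 1) =
      (∫ t in (0:ℝ)..1, ((D' t * cfc h (D t)).trace).re)
        + ((cfc H (D 0)).trace).re - ((cfc H (D 1)).trace).re
        + (1/2) * (((cfc Real.sign (D 1)).trace).re - ((cfc Real.sign (D 0)).trace).re)) := by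
  classical
  have hD'herm := fun t => deriv_isHermitian hD hderiv t
  have c1 : ∀ t : ℝ, ((D' t * cfc h (D t)).trace).im = 0 := fun t =>
    trace_mul_im_zero (hD'herm t) (cfc_isHermitian (hD t) h)
  have htrace : ∀ (t : ℝ) (φ : ℝ → ℝ),
      (cfc φ (D t)).trace = ((∑ i, φ ((hD t).eigenvalues i) : ℝ) : ℂ) :=
    fun t φ => trace_cfc' (hD t) φ
  have c2 : ∀ (t : ℝ) (φ : ℝ → ℝ), ((cfc φ (D t)).trace).im = 0 := by
    intro t φ; rw [htrace]; simp
  refine ⟨c1, c2 0 H, c2 1 H, c2 0 Real.sign, c2 1 Real.sign, ?_⟩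
  have htr_re : ∀ (t : ℝ) (φ : ℝ → ℝ),
      ((cfc φ (D t)).trace).re = ∑ i, φ ((hD t).eigenvalues i) := by
    intro t φ; rw [htrace]; simp
  have hsgn0 : ((cfc Real.sign (D 0)).trace).re = (n : ℝ) - 2 * negEigCount (hD 0) := by
    rw [htr_re]; exact sign_sum_eq (hD 0) hD0
  have hsgn1 : ((cfc Real.sign (D 1)).trace).re = (n : ℝ) - 2 * negEigCount (hD 1) := by
    rw [htr_re]; exact sign_sum_eq (hD 1) hD1
  set f : ℝ → ℝ := fun t => ((cfc H (D t)).trace).re with hf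
  set g' : ℝ → ℝ := fun t => ((D' t * cfc h (D t)).trace).re with hg'
  suffices hkey : ∫ t in (0:ℝ)..1, g' t = f 1 - f 0 by
    rw [hkey, hsgn0, hsgn1]
    ring
  -- continuity of D
  have hDcont : Continuous D := by
    rw [continuous_iff_continuousAt]; exact fun t => (hderiv t).continuousAt
  -- eigenvalue bound on S = Icc (-1) 2
  have hcont2 : Continuous (fun t => ((D t * D t).trace).re) :=
    Complex.continuous_re.comp ((hDcont.matrix_mul hDcont).matrix_trace)
  obtain ⟨t₀, ht₀S, hC⟩ := isCompact_Icc.exists_isMaxOn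
    (Set.nonempty_Icc.mpr (by norm_num : (-1:ℝ) ≤ 2)) hcont2.continuousOn
  set C : ℝ := ((D t₀ * D t₀).trace).re with hCdef
  set R : ℝ := Real.sqrt C with hR
  have hRnn : 0 ≤ R := Real.sqrt_nonneg _
  have htrsq : ∀ t : ℝ, ((D t * D t).trace).re = ∑ j, ((hD t).eigenvalues j) ^ 2 := by
    intro t
    have hpow : D t * D t = cfc (fun x : ℝ => x ^ 2) (D t) := by
      have h2 := cfc_pow_id (R := ℝ) (D t) 2 (hD t)
      rw [h2, pow_two]
    rw [hpow, htr_re]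
  have hEig : ∀ t ∈ Set.Icc (-1:ℝ) 2, ∀ i, |(hD t).eigenvalues i| ≤ R := by
    intro t ht i
    have hsq : ((hD t).eigenvalues i) ^ 2 ≤ C := by
      calc ((hD t).eigenvalues i) ^ 2
          ≤ ∑ j, ((hD t).eigenvalues j) ^ 2 :=
            Finset.single_le_sum (f := fun j => ((hD t).eigenvalues j) ^ 2)
              (fun j _ => sq_nonneg _) (Finset.mem_univ i)
        _ = ((D t * D t).trace).re := (htrsq t).symm
        _ ≤ C := hC ht
    calc |(hD t).eigenvalues i| = Real.sqrt (((hD t).eigenvalues i) ^ 2) :=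
          (Real.sqrt_sq_eq_abs _).symm
      _ ≤ R := Real.sqrt_le_sqrt hsq
  have hEigIcc : ∀ t ∈ Set.Icc (-1:ℝ) 2, ∀ i, (hD t).eigenvalues i ∈ Set.Icc (-R) R := by
    intro t ht i
    have := abs_le.mp (hEig t ht i)
    exact ⟨this.1, this.2⟩
  -- bound for entries of D'
  set ψ : ℝ → ℝ := fun t => ∑ i, ∑ j, ‖D' t i j‖ with hψ
  have hψcont : Continuous ψ := by
    refine continuous_finset_sum _ fun i _ => continuous_finset_sum _ fun j _ => ?_
    exact continuous_norm.comp
      ((continuous_apply j).comp ((continuous_apply i).comp hD'cont))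
  obtain ⟨t₁, ht₁S, hCd⟩ := isCompact_Icc.exists_isMaxOn
    (Set.nonempty_Icc.mpr (by norm_num : (-1:ℝ) ≤ 2)) hψcont.continuousOn
  set Cd : ℝ := ψ t₁ with hCddef
  -- trace product bound
  have htrb : ∀ t ∈ Set.Icc (-1:ℝ) 2, ∀ (B : Matrix (Fin n) (Fin n) ℂ) (c : ℝ), 0 ≤ c →
      (∀ i j, ‖B i j‖ ≤ c) → ‖(D' t * B).trace‖ ≤ Cd * c := by
    intro t ht B c hc0 hB
    calc ‖(D' t * B).trace‖
        = ‖∑ i, ∑ k, D' t i k * B k i‖ := by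
          rw [Matrix.trace]; simp only [Matrix.diag, Matrix.mul_apply]
      _ ≤ ∑ i, ‖∑ k, D' t i k * B k i‖ := norm_sum_le _ _
      _ ≤ ∑ i, ∑ k, ‖D' t i k * B k i‖ :=
          Finset.sum_le_sum fun i _ => norm_sum_le _ _
      _ ≤ ∑ i, ∑ k, ‖D' t i k‖ * c := by
          refine Finset.sum_le_sum fun i _ => Finset.sum_le_sum fun k _ => ?_
          rw [norm_mul]
          exact mul_le_mul_of_nonneg_left (hB k i) (norm_nonneg _)
      _ = ψ t * c := by rw [hψ]; rw [Finset.sum_mul]; simp [Finset.sum_mul]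
      _ ≤ Cd * c := mul_le_mul_of_nonneg_right (hCd ht) hc0
  -- Weierstrass approximation sequence
  have hex : ∀ k : ℕ, ∃ p : ℝ[X], ∀ x ∈ Set.Icc (-R) R, |p.eval x - h x| < 1/(k+1) := fun k =>
    exists_polynomial_near_of_continuousOn (-R) R h hh.continuousOn _
      (by positivity)
  choose p hp using hex
  set F : ℕ → ℝ → ℝ :=
    fun k t => ((cfc (fun x => (antider (p k)).eval x) (D t)).trace).re + n * H 0 with hF
  set F' : ℕ → ℝ → ℝ :=
    fun k t => ((D' t * cfc (fun x => (p k).eval x) (D t)).trace).re with hF'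
  have hFderiv : ∀ k t, HasDerivAt (F k) (F' k t) t := by
    intro k t
    have h1 := polyTraceDeriv hD hderiv (antider (p k)) t
    rw [antider_derivative] at h1
    have h2 := Complex.reCLM.hasFDerivAt.comp_hasDerivAt t h1
    exact h2.add_const (n * H 0)
  -- pointwise bound
  have hptbd : ∀ k : ℕ, ∀ t ∈ Set.Icc (-1:ℝ) 2, |F k t - f t| ≤ (n * R) * (1/(k+1)) := by
    intro k t ht
    have hφbd : ∀ x ∈ Set.Icc (-R) R, |(antider (p k)).eval x + H 0 - H x| ≤ 1/(k+1) * R := by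
      intro x hx
      set φ : ℝ → ℝ := fun y => (antider (p k)).eval y + H 0 - H y with hφdef
      have hder : ∀ y ∈ Set.Icc (-R) R,
          HasDerivWithinAt φ ((p k).eval y - h y) (Set.Icc (-R) R) y := by
        intro y _
        have hd1 := ((Polynomial.hasDerivAt (antider (p k)) y).add_const (H 0)).sub (hH y)
        rw [antider_derivative] at hd1
        exact hd1.hasDerivWithinAt
      have hbd : ∀ y ∈ Set.Icc (-R) R, ‖(p k).eval y - h y‖ ≤ 1/(k+1) :=
        fun y hy => le_of_lt (hp k y hy)
      have h0mem : (0:ℝ) ∈ Set.Icc (-R) R := by constructor <;> linarith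
      have hmvt := (convex_Icc (-R) R).norm_image_sub_le_of_norm_hasDerivWithin_le
        hder hbd h0mem hx
      have hφ0 : φ 0 = 0 := by simp [hφdef, antider_eval_zero]
      rw [hφ0, sub_zero, sub_zero] at hmvt
      calc |φ x| ≤ 1/(k+1) * |x| := hmvt
        _ ≤ 1/(k+1) * R := by
            have : |x| ≤ R := abs_le.mpr ⟨hx.1, hx.2⟩
            have h1k : (0:ℝ) ≤ 1/(k+1) := by positivity
            exact mul_le_mul_of_nonneg_left this h1k
    have e1 : F k t - f t =
        ∑ i, ((antider (p k)).eval ((hD t).eigenvalues i) + H 0 - H ((hD t).eigenvalues i)) := by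
      simp only [hF, hf]
      rw [htr_re, htr_re]
      rw [Finset.sum_sub_distrib, Finset.sum_add_distrib]
      simp only [Finset.sum_const, Finset.card_univ, Fintype.card_fin, nsmul_eq_mul]
    rw [e1]
    calc |∑ i, ((antider (p k)).eval ((hD t).eigenvalues i) + H 0 - H ((hD t).eigenvalues i))|
        ≤ ∑ i, |(antider (p k)).eval ((hD t).eigenvalues i) + H 0 - H ((hD t).eigenvalues i)| :=
          Finset.abs_sum_le_sum_abs _ _
      _ ≤ ∑ _i : Fin n, 1/(k+1) * R :=
          Finset.sum_le_sum fun i _ => hφbd _ (hEigIcc t ht i)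
      _ = (n * R) * (1/(k+1)) := by
          rw [Finset.sum_const, Finset.card_univ]
          simp [nsmul_eq_mul]
          ring
  have hSsubset : Set.Icc (0:ℝ) 1 ⊆ Set.Ioo (-1:ℝ) 2 := by
    intro x hx
    exact ⟨by linarith [hx.1], by linarith [hx.2]⟩
  have hIooS : Set.Ioo (-1:ℝ) 2 ⊆ Set.Icc (-1:ℝ) 2 := Set.Ioo_subset_Icc_self
  -- pointwise convergence
  have hpt : ∀ t ∈ Set.Ioo (-1:ℝ) 2,
      Filter.Tendsto (fun k => F k t) Filter.atTop (nhds (f t)) := by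
    intro t ht
    rw [← tendsto_sub_nhds_zero_iff]
    have hto : Filter.Tendsto (fun k : ℕ => (n * R) * (1/(k+1))) Filter.atTop (nhds 0) := by
      have := tendsto_one_div_add_atTop_nhds_zero_nat (𝕜 := ℝ)
      simpa using this.const_mul ((n:ℝ) * R)
    refine squeeze_zero_norm (fun k => ?_) hto
    exact hptbd k t (hIooS ht)
  -- uniform bound
  have hub : ∀ k : ℕ, ∀ t ∈ Set.Icc (-1:ℝ) 2, |F' k t - g' t| ≤ (Cd * n) * (1/(k+1)) := by
    intro k t ht
    have e1 : (D' t * cfc (fun x => (p k).eval x) (D t)).trace - (D' t * cfc h (D t)).trace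
        = (D' t * cfc (fun x => (p k).eval x - h x) (D t)).trace := by
      rw [← Matrix.trace_sub, ← Matrix.mul_sub, cfc_sub' (hD t)]
    have hent : ∀ i j, ‖(cfc (fun x => (p k).eval x - h x) (D t)) i j‖
        ≤ n * (1/(k+1)) := by
      refine cfc_entry_le (hD t) _ (fun i => ?_)
      exact le_of_lt (hp k _ (hEigIcc t ht i))
    have h2 : ‖(D' t * cfc (fun x => (p k).eval x - h x) (D t)).trace‖
        ≤ Cd * (n * (1/(k+1))) :=
      htrb t ht _ _ (by positivity) hent
    calc |F' k t - g' t|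
        = |((D' t * cfc (fun x => (p k).eval x) (D t)).trace
            - (D' t * cfc h (D t)).trace).re| := by
          simp only [hF', hg', Complex.sub_re]
      _ ≤ ‖(D' t * cfc (fun x => (p k).eval x) (D t)).trace
            - (D' t * cfc h (D t)).trace‖ := Complex.abs_re_le_norm _
      _ = ‖(D' t * cfc (fun x => (p k).eval x - h x) (D t)).trace‖ := by rw [e1]
      _ ≤ Cd * (n * (1/(k+1))) := h2
      _ = (Cd * n) * (1/(k+1)) := by ring
  have huniform : TendstoUniformlyOn F' g' Filter.atTop (Set.Ioo (-1:ℝ) 2) := by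
    rw [Metric.tendstoUniformlyOn_iff]
    intro ε hε
    have hto : Filter.Tendsto (fun k : ℕ => (Cd * n) * (1/(k+1))) Filter.atTop (nhds 0) := by
      have := tendsto_one_div_add_atTop_nhds_zero_nat (𝕜 := ℝ)
      simpa using this.const_mul (Cd * (n:ℝ))
    filter_upwards [hto.eventually (gt_mem_nhds hε)] with k hk t ht
    rw [Real.dist_eq]
    calc |g' t - F' k t| = |F' k t - g' t| := abs_sub_comm _ _
      _ ≤ (Cd * n) * (1/(k+1)) := hub k t (hIooS ht)
      _ < ε := hk
  -- derivative of f
  have hfderiv : ∀ t ∈ Set.Ioo (-1:ℝ) 2, HasDerivAt f (g' t) t := fun t ht =>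
    hasDerivAt_of_tendstoUniformlyOn isOpen_Ioo huniform
      (Filter.Eventually.of_forall (fun k x _ => hFderiv k x)) hpt ht
  -- continuity of g' on [0,1]
  have hDpowcont : ∀ j : ℕ, Continuous (fun t => (D t) ^ j) := by
    intro j
    induction j with
    | zero => simpa using continuous_const
    | succ j ih =>
        have : (fun t => (D t) ^ (j+1)) = fun t => D t * (D t) ^ j := by
          funext t; rw [pow_succ']
        rw [this]
        exact hDcont.matrix_mul ih
  have hF'cont : ∀ k, Continuous (F' k) := by
    intro k
    have e : F' k = fun t => ((D' t *
        ∑ j ∈ Finset.range ((p k).natDegree + 1), (p k).coeff j • (D t) ^ j).trace).re := by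
      funext t
      simp only [hF']
      rw [cfc_poly (hD t) (p k) (Nat.lt_succ_self _)]
    rw [e]
    refine Complex.continuous_re.comp ((hD'cont.matrix_mul ?_).matrix_trace)
    exact continuous_finset_sum _ fun j _ => ((hDpowcont j).const_smul ((p k).coeff j))
  have hg'cont : ContinuousOn g' (Set.Icc (0:ℝ) 1) := by
    have := huniform.continuousOn
      (Filter.Eventually.of_forall fun k => (hF'cont k).continuousOn).frequently
    exact this.mono hSsubset
  -- FTC
  apply intervalIntegral.integral_eq_sub_of_hasDerivAt
  · intro t ht
    rw [Set.uIcc_of_le (by norm_num : (0:ℝ) ≤ 1)] at ht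
    exact hfderiv t (hSsubset ht)
  · apply ContinuousOn.intervalIntegrable
    rw [Set.uIcc_of_le (by norm_num : (0:ℝ) ≤ 1)]
    exact hg'cont
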